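/- Discrete l'Hospital monotonicity rule, case ρ nonincreasing and g·Δg < 0: if ρ is nonincreasing on [a+1,b] (ρ(n) ≥ ρ(n+1) whenever a+1 ≤ n ≤ n+1 ≤ b) and g(n)·Δg(n) < 0 for all n ∈ [a+1,b], then there exists k ∈ [a,b] such that r is nonincreasing on [a,k] (r(n−1) ≥ r(n) for all n with a+1 ≤ n ≤ k) and nondecreasing on [k,b] (r(n−1) ≤ r(n) for all n with k+1 ≤ n ≤ b). -/

import Mathlib

/-- Discrete l'Hospital monotonicity rule, case ρ nonincreasing and g·Δg < 0. -/
theorem discrete_lhospital_monotone_rule_case4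
    (a b : ℤ) (hab : a ≤ b) (f g : ℤ → ℝ)
    (hg : ∀ n : ℤ, a ≤ n → n ≤ b → g n ≠ 0)
    (hgsign : ∀ n m : ℤ, a ≤ n → n ≤ b → a ≤ m → m ≤ b → 0 < g n * g m)
    (hΔg : ∀ n : ℤ, a + 1 ≤ n → n ≤ b → g n - g (n - 1) ≠ 0)
    (hΔgsign : ∀ n m : ℤ, a + 1 ≤ n → n ≤ b → a + 1 ≤ m → m ≤ b →
      0 < (g n - g (n - 1)) * (g m - g (m - 1)))
    (hρ : ∀ n : ℤ, a + 1 ≤ n → n + 1 ≤ b →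
      (f (n + 1) - f n) / (g (n + 1) - g n) ≤ (f n - f (n - 1)) / (g n - g (n - 1)))
    (hgΔg : ∀ n : ℤ, a + 1 ≤ n → n ≤ b → g n * (g n - g (n - 1)) < 0) :
    ∃ k : ℤ, a ≤ k ∧ k ≤ b ∧
      (∀ n : ℤ, a + 1 ≤ n → n ≤ k → f n / g n ≤ f (n - 1) / g (n - 1)) ∧
      (∀ n : ℤ, k + 1 ≤ n → n ≤ b → f (n - 1) / g (n - 1) ≤ f n / g n) := by
  classical
  set ψ : ℤ → ℝ := fun n => (f n - f (n - 1)) / (g n - g (n - 1)) - f n / g n with hψ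
  -- coefficient Δg(n)/g(n-1) is negative
  have hc : ∀ n : ℤ, a + 1 ≤ n → n ≤ b → (g n - g (n - 1)) / g (n - 1) < 0 := by
    intro n h1 h2
    have hg1 : g (n - 1) ≠ 0 := hg _ (by omega) (by omega)
    have h3 := hgΔg n h1 h2
    have h4 := hgsign n (n - 1) (by omega) h2 (by omega) (by omega)
    have hprod : (g n - g (n - 1)) * g (n - 1) < 0 := by
      nlinarith [mul_pos h4 (neg_pos.mpr h3), sq_nonneg (g n)]
    have heq : (g n - g (n - 1)) / g (n - 1)
        = ((g n - g (n - 1)) * g (n - 1)) / (g (n - 1)) ^ 2 := by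
      field_simp
    rw [heq]
    exact div_neg_of_neg_of_pos hprod (by positivity)
  -- key identity
  have hA : ∀ n : ℤ, a + 1 ≤ n → n ≤ b →
      f n / g n - f (n - 1) / g (n - 1) = (g n - g (n - 1)) / g (n - 1) * ψ n := by
    intro n h1 h2
    have hg0 : g n ≠ 0 := hg n (by omega) h2
    have hg1 : g (n - 1) ≠ 0 := hg _ (by omega) (by omega)
    have hΔ : g n - g (n - 1) ≠ 0 := hΔg n h1 h2
    simp only [hψ]
    field_simp
    ring
  -- persistence of ψ ≤ 0
  have hB : ∀ n : ℤ, a + 1 ≤ n → n + 1 ≤ b → ψ n ≤ 0 → ψ (n + 1) ≤ 0 := by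
    intro n h1 h2 h3
    have hg0 : g n ≠ 0 := hg n (by omega) (by omega)
    have hρn := hρ n h1 h2
    have e1 : f (n + 1) / g (n + 1) - f n / g n
        = (g (n + 1) - g n) / g n * ψ (n + 1) := by
      have := hA (n + 1) (by omega) h2
      simpa using this
    have hc' : (g (n + 1) - g n) / g n < 0 := by
      have := hc (n + 1) (by omega) h2
      simpa using this
    have hgg : 0 < g (n + 1) / g n := by
      have h4 := hgsign (n + 1) n (by omega) h2 (by omega) (by omega)
      have heq : g (n + 1) / g n = (g (n + 1) * g n) / (g n) ^ 2 := by
        field_simp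
      rw [heq]; positivity
    have hone : 1 + (g (n + 1) - g n) / g n = g (n + 1) / g n := by
      field_simp
      ring
    have h3' : (f n - f (n - 1)) / (g n - g (n - 1)) - f n / g n ≤ 0 := h3
    have hψ1 : ψ (n + 1) = (f (n + 1) - f n) / (g (n + 1) - g n) - f (n + 1) / g (n + 1) := by
      simp only [hψ]; norm_num
    have step2 : ψ (n + 1) ≤ -((g (n + 1) - g n) / g n * ψ (n + 1)) := by
      linarith [hψ1, e1]
    by_contra hpos
    push_neg at hpos
    have hcontra : 0 < (1 + (g (n + 1) - g n) / g n) * ψ (n + 1) := by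
      rw [hone]; exact mul_pos hgg hpos
    nlinarith [step2, hcontra]
  -- sign of ψ controls monotonicity
  have hdec : ∀ n : ℤ, a + 1 ≤ n → n ≤ b → 0 ≤ ψ n → f n / g n ≤ f (n - 1) / g (n - 1) := by
    intro n h1 h2 h3
    have := hA n h1 h2
    have hm : (g n - g (n - 1)) / g (n - 1) * ψ n ≤ 0 :=
      mul_nonpos_of_nonpos_of_nonneg (hc n h1 h2).le h3
    linarith
  have hinc : ∀ n : ℤ, a + 1 ≤ n → n ≤ b → ψ n ≤ 0 → f (n - 1) / g (n - 1) ≤ f n / g n := by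
    intro n h1 h2 h3
    have := hA n h1 h2
    have hm := mul_nonneg (neg_nonneg.mpr (hc n h1 h2).le) (neg_nonneg.mpr h3)
    nlinarith [hm]
  by_cases hex : ∃ z : ℤ, (a + 1 ≤ z ∧ z ≤ b ∧ ψ z ≤ 0)
  · obtain ⟨m, ⟨hm1, hm2, hm3⟩, hmin⟩ :=
      Int.exists_least_of_bdd (P := fun z => a + 1 ≤ z ∧ z ≤ b ∧ ψ z ≤ 0)
        ⟨a + 1, fun z hz => hz.1⟩ hex
    refine ⟨m - 1, by omega, by omega, ?_, ?_⟩
    · intro n h1 h2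
      refine hdec n h1 (by omega) ?_
      by_contra hneg
      push_neg at hneg
      have := hmin n ⟨h1, by omega, le_of_lt hneg⟩
      omega
    · intro n h1 h2
      have key : ∀ n : ℤ, m ≤ n → n ≤ b → ψ n ≤ 0 := by
        refine Int.le_induction (fun _ => hm3) ?_
        intro k hk ih hkb
        exact hB k (by omega) hkb (ih (by omega))
      exact hinc n (by omega) h2 (key n (by omega) h2)
  · refine ⟨b, hab, le_refl b, ?_, ?_⟩
    · intro n h1 h2
      push_neg at hex
      exact hdec n h1 h2 (hex n h1 h2).le
    · intro n h1 h2; omega
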